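/- For every integer n with 7 ≤ n ≤ 3375, the inequality ((1+√5)/2)^{φ(n)} < e^{5.03933}·n² implies n ≤ 90. -/
import Mathlib

open Finset

lemma scalar_aux (k m : ℕ) (h : k + 2 ≤ m) : m * (k + 1) ≤ (k + 1 + 1) * (m - 1) := by
  obtain ⟨a, rfl⟩ : ∃ a, m = k + 2 + a := ⟨m - (k + 2), by omega⟩
  have : k + 2 + a - 1 = k + 1 + a := by omega
  rw [this]
  nlinarith

lemma prod_bounds (S : Finset ℕ) (h2 : ∀ p ∈ S, 2 ≤ p) :
    Nat.factorial (S.card + 1) ≤ ∏ p ∈ S, p ∧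
      ∏ p ∈ S, p ≤ (S.card + 1) * ∏ p ∈ S, (p - 1) := by
  induction S using Finset.strongInduction with
  | _ S ih =>
    rcases S.eq_empty_or_nonempty with rfl | hne
    · simp [Nat.factorial]
    · set m := S.max' hne with hm_def
      have hmS : m ∈ S := S.max'_mem hne
      have hm2 : 2 ≤ m := h2 m hmS
      set T := S.erase m with hT
      have hcard : S.card = T.card + 1 := by
        rw [hT, Finset.card_erase_of_mem hmS]
        have := Finset.card_pos.mpr hne
        omega
      have hsub : S ⊆ Finset.Icc 2 m := fun p hp =>
        Finset.mem_Icc.mpr ⟨h2 p hp, S.le_max' p hp⟩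
      have hScard : S.card ≤ m - 1 := by
        have := Finset.card_le_card hsub
        simpa [Nat.card_Icc] using this
      have hmlarge : T.card + 2 ≤ m := by omega
      have ihT := ih T (Finset.erase_ssubset hmS)
        (fun p hp => h2 p (Finset.mem_of_mem_erase hp))
      have hprod : ∏ p ∈ S, p = m * ∏ p ∈ T, p :=
        (Finset.mul_prod_erase S (fun p => p) hmS).symm
      have hprod' : ∏ p ∈ S, (p - 1) = (m - 1) * ∏ p ∈ T, (p - 1) :=
        (Finset.mul_prod_erase S (fun p => p - 1) hmS).symm
      constructor
      · rw [hprod, hcard, Nat.factorial_succ]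
        exact Nat.mul_le_mul (by omega) ihT.1
      · rw [hprod, hprod', hcard]
        calc m * ∏ p ∈ T, p ≤ m * ((T.card + 1) * ∏ p ∈ T, (p - 1)) :=
              Nat.mul_le_mul_left _ ihT.2
          _ = (m * (T.card + 1)) * ∏ p ∈ T, (p - 1) := by ring
          _ ≤ ((T.card + 1 + 1) * (m - 1)) * ∏ p ∈ T, (p - 1) :=
              Nat.mul_le_mul_right _ (scalar_aux T.card m hmlarge)
          _ = (T.card + 1 + 1) * ((m - 1) * ∏ p ∈ T, (p - 1)) := by ring

lemma six_totient (n : ℕ) (h1 : 0 < n) (h2 : n ≤ 3375) : n ≤ 6 * n.totient := by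
  set S := n.primeFactors with hS
  have h2p : ∀ p ∈ S, 2 ≤ p := fun p hp => (Nat.prime_of_mem_primeFactors hp).two_le
  obtain ⟨hfac, hineq⟩ := prod_bounds S h2p
  have hdvd : ∏ p ∈ S, p ≤ n := Nat.le_of_dvd h1 (Nat.prod_primeFactors_dvd n)
  have hcard : S.card + 1 ≤ 6 := by
    by_contra hc
    have h7 : Nat.factorial 7 ≤ Nat.factorial (S.card + 1) := Nat.factorial_le (by omega)
    have : (5040 : ℕ) ≤ n := by
      calc (5040 : ℕ) = Nat.factorial 7 := by decide
        _ ≤ Nat.factorial (S.card + 1) := h7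
        _ ≤ ∏ p ∈ S, p := hfac
        _ ≤ n := hdvd
    omega
  have key := Nat.totient_mul_prod_primeFactors n
  have hpos : 0 < ∏ p ∈ S, p := Finset.prod_pos (fun p hp => (h2p p hp).trans_lt' (by omega))
  have step : n * ∏ p ∈ S, p ≤ 6 * n.totient * ∏ p ∈ S, p := by
    calc n * ∏ p ∈ S, p ≤ n * ((S.card + 1) * ∏ p ∈ S, (p - 1)) :=
          Nat.mul_le_mul_left _ hineq
      _ ≤ n * (6 * ∏ p ∈ S, (p - 1)) := by
          apply Nat.mul_le_mul_left
          exact Nat.mul_le_mul_right _ hcard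
      _ = 6 * (n * ∏ p ∈ S, (p - 1)) := by ring
      _ = 6 * (n.totient * ∏ p ∈ S, p) := by rw [← key]
      _ = 6 * n.totient * ∏ p ∈ S, p := by ring
  exact Nat.le_of_mul_le_mul_right step hpos

set_option maxRecDepth 100000 in
set_option maxHeartbeats 1000000 in
lemma phi_small_range : ∀ n ∈ Finset.Icc 91 269,
    155 * n ^ 2 * 500 ^ n.totient ≤ 809 ^ n.totient := by decide

lemma key_nat (n : ℕ) (h91 : 91 ≤ n) (h3375 : n ≤ 3375) :
    155 * n ^ 2 * 500 ^ n.totient ≤ 809 ^ n.totient := by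
  rcases le_or_gt n 269 with hle | hgt
  · exact phi_small_range n (Finset.mem_Icc.mpr ⟨h91, hle⟩)
  · have h6 : n ≤ 6 * n.totient := six_totient n (by omega) h3375
    have h45 : 45 ≤ n.totient := by omega
    obtain ⟨m, hm⟩ : ∃ m, n.totient = 45 + m := ⟨n.totient - 45, by omega⟩
    rw [hm]
    have base : 155 * 3375 ^ 2 * 500 ^ 45 ≤ 809 ^ 45 := by norm_num
    calc 155 * n ^ 2 * 500 ^ (45 + m) ≤ 155 * 3375 ^ 2 * 500 ^ (45 + m) := by
          have : n ^ 2 ≤ 3375 ^ 2 := Nat.pow_le_pow_left h3375 2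
          exact Nat.mul_le_mul_right _ (Nat.mul_le_mul_left _ this)
      _ = (155 * 3375 ^ 2 * 500 ^ 45) * 500 ^ m := by rw [pow_add]; ring
      _ ≤ 809 ^ 45 * 809 ^ m := Nat.mul_le_mul base (Nat.pow_le_pow_left (by omega) m)
      _ = 809 ^ (45 + m) := (pow_add 809 45 m).symm

lemma exp_bound : Real.exp 5.03933 < 155 := by
  have hsplit : Real.exp 5.03933 = Real.exp 1 ^ 5 * Real.exp 0.03933 := by
    rw [← Real.exp_nat_mul, ← Real.exp_add]; norm_num
  have h3 : Real.exp 1 < 2.7182818286 := Real.exp_one_lt_d9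
  have hpow : Real.exp 1 ^ 5 < 2.7182818286 ^ 5 := by
    have := Real.exp_pos 1
    gcongr <;> linarith
  have h2 : Real.exp 0.03933 ≤ 1 / 0.96067 := by
    have h := Real.add_one_le_exp (-0.03933 : ℝ)
    rw [Real.exp_neg] at h
    have he : (0:ℝ) < Real.exp 0.03933 := Real.exp_pos _
    have hinv : Real.exp 0.03933 * (Real.exp 0.03933)⁻¹ = 1 := mul_inv_cancel₀ (ne_of_gt he)
    nlinarith
  have hnum : (2.7182818286:ℝ) ^ 5 * (1 / 0.96067) < 155 := by norm_num
  calc Real.exp 5.03933 = Real.exp 1 ^ 5 * Real.exp 0.03933 := hsplit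
    _ < 2.7182818286 ^ 5 * (1 / 0.96067) := by
        have := Real.exp_pos (0.03933:ℝ)
        have h15 : (0:ℝ) < Real.exp 1 ^ 5 := by positivity
        nlinarith
    _ < 155 := hnum

lemma golden_ge : (809 / 500 : ℝ) ≤ (1 + Real.sqrt 5) / 2 := by
  have hs : (2.236 : ℝ) ≤ Real.sqrt 5 := by
    nlinarith [Real.sq_sqrt (show (0:ℝ) ≤ 5 by norm_num), Real.sqrt_nonneg 5]
  linarith

/-- For every `7 ≤ n ≤ 3375`, the inequality `((1+√5)/2)^{φ(n)} < e^{5.03933}·n²`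
implies `n ≤ 90`. -/
theorem totient_inequality_neg_one_bound (n : ℕ) (h7 : 7 ≤ n) (h3375 : n ≤ 3375)
    (h : ((1 + Real.sqrt 5) / 2) ^ n.totient < Real.exp 5.03933 * (n : ℝ) ^ 2) :
    n ≤ 90 := by
  by_contra hc
  have h91 : 91 ≤ n := by omega
  have key := key_nat n h91 h3375
  have keyR : (155 : ℝ) * (n : ℝ) ^ 2 * 500 ^ n.totient ≤ 809 ^ n.totient := by
    exact_mod_cast key
  have h500 : (0:ℝ) < 500 ^ n.totient := by positivity
  have hdiv : (155 : ℝ) * (n : ℝ) ^ 2 ≤ (809 / 500) ^ n.totient := by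
    rw [div_pow, le_div_iff₀ h500]
    exact keyR
  have hmono : ((809 : ℝ) / 500) ^ n.totient ≤ ((1 + Real.sqrt 5) / 2) ^ n.totient :=
    pow_le_pow_left₀ (by norm_num) golden_ge _
  have hn2 : (0:ℝ) < (n : ℝ) ^ 2 := by positivity
  have hlast : Real.exp 5.03933 * (n : ℝ) ^ 2 < 155 * (n : ℝ) ^ 2 :=
    mul_lt_mul_of_pos_right exp_bound hn2
  linarith
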